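/- Let q, a, b, c ∈ ℂ with |q| < 1, a ≠ 0, b ≠ 0, |c/(a b)| < 1, and suppose c q^j ≠ 1 for all integers j ≥ 0. Then the q-Gauss sum holds: ∑_{k=0}^∞ (a;q)_k (b;q)_k (c/(a b))^k / ((q;q)_k (c;q)_k) = (c/a;q)_∞ (c/b;q)_∞ / ((c;q)_∞ (c/(a b);q)_∞), where the series converges absolutely and the denominator on the right is nonzero. -/

import Mathlib

open Filter Finset Complex Topology

/-- The finite q-shifted factorial `(a;q)_n = ∏_{j=0}^{n-1} (1 - a q^j)`. -/
noncomputable def qPoch (q a : ℂ) (n : ℕ) : ℂ := ∏ j ∈ Finset.range n, (1 - a * q ^ j)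

/-- The infinite q-shifted factorial `(a;q)_∞ = ∏_{j=0}^{∞} (1 - a q^j)`. -/
noncomputable def qPochInf (q a : ℂ) : ℂ := ∏' j : ℕ, (1 - a * q ^ j)



lemma qPoch_succ (q x : ℂ) (n : ℕ) :
    qPoch q x (n+1) = qPoch q x n * (1 - x * q ^ n) := Finset.prod_range_succ _ _

lemma qPoch_shift (q x : ℂ) (n k : ℕ) :
    qPoch q x (n + k) = qPoch q x n * qPoch q (x * q ^ n) k := by
  unfold qPoch
  rw [Finset.prod_range_add]
  congr 1
  refine Finset.prod_congr rfl fun i _ => ?_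
  rw [pow_add]; ring

lemma qPoch_mul_one_sub (q x : ℂ) (k : ℕ) :
    qPoch q x k * (1 - x * q ^ k) = (1 - x) * qPoch q (x * q) k := by
  have h2 := qPoch_shift q x 1 k
  rw [Nat.add_comm 1 k] at h2
  rw [← qPoch_succ, h2]
  unfold qPoch
  rw [Finset.prod_range_one, pow_zero, mul_one, pow_one]

lemma qPoch_ne_zero {q x : ℂ} (h : ∀ j : ℕ, 1 - x * q ^ j ≠ 0) (n : ℕ) :
    qPoch q x n ≠ 0 :=
  Finset.prod_ne_zero_iff.mpr fun j _ => h j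

lemma per_k (q a b u : ℂ) (h0 : 1 - a*b*u ≠ 0) (k : ℕ)
    (hQ : qPoch q q k ≠ 0) (hQ1 : (1 - q * q ^ k) ≠ 0)
    (hC : qPoch q (a*b*u) k ≠ 0) (hD : qPoch q (a*b*u*q) k ≠ 0)
    (h1 : 1 - (a*b*u) * q ^ k ≠ 0) (h2 : 1 - (a*b*u*q) * q ^ k ≠ 0) :
    (1 - a*b*u) * (1 - u) *
        (qPoch q a k * qPoch q b k * u ^ k / (qPoch q q k * qPoch q (a*b*u) k)) -
      (1 - a*u) * (1 - b*u) *
        (qPoch q a k * qPoch q b k * (u*q) ^ k / (qPoch q q k * qPoch q (a*b*u*q) k)) =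
    (qPoch q a k * qPoch q b k * u ^ k * (1 - q ^ k) * (1 - (a*b*u) * q ^ k) /
        (qPoch q q k * qPoch q (a*b*u*q) k)) -
      (qPoch q a (k+1) * qPoch q b (k+1) * u ^ (k+1) * (1 - q ^ (k+1)) *
          (1 - (a*b*u) * q ^ (k+1)) /
        (qPoch q q (k+1) * qPoch q (a*b*u*q) (k+1))) := by
  have hCD : qPoch q (a*b*u) k = (1 - a*b*u) * qPoch q (a*b*u*q) k / (1 - (a*b*u) * q ^ k) := by
    rw [eq_div_iff h1]
    exact qPoch_mul_one_sub q (a*b*u) k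
  rw [qPoch_succ q a k, qPoch_succ q b k, qPoch_succ q q k, qPoch_succ q (a*b*u*q) k, hCD]
  field_simp
  ring

-- tail case : ‖x‖ ≤ 1/2
lemma hasProd_small (q x : ℂ) (hq : ‖q‖ < 1) (hx : ‖x‖ ≤ 1/2) :
    HasProd (fun j : ℕ => 1 - x * q ^ j) (∏' j : ℕ, (1 - x * q ^ j)) ∧
      (∏' j : ℕ, (1 - x * q ^ j)) ≠ 0 := by
  have hq0 : (0:ℝ) ≤ ‖q‖ := norm_nonneg q
  have hnorm : ∀ j : ℕ, ‖-(x * q ^ j)‖ ≤ 1/2 := by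
    intro j
    rw [norm_neg, norm_mul, norm_pow]
    calc ‖x‖ * ‖q‖ ^ j ≤ (1/2) * 1 := by
          apply mul_le_mul hx _ (by positivity) (by norm_num)
          exact pow_le_one₀ hq0 hq.le
      _ = 1/2 := by norm_num
  have hne : ∀ j : ℕ, (1 - x * q ^ j) ≠ 0 := by
    intro j h
    have h1 : ‖x * q ^ j‖ = 1 := by
      have : x * q ^ j = 1 := by linear_combination -h
      rw [this, norm_one]
    have h2 := hnorm j
    rw [norm_neg] at h2
    linarith
  have hsum : Summable fun j : ℕ => Complex.log (1 - x * q ^ j) := by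
    apply Summable.of_norm_bounded (g := fun j => 3/2 * (‖x‖ * ‖q‖ ^ j))
    · exact (summable_geometric_of_lt_one hq0 hq).mul_left _ |>.mul_left _
    · intro j
      have h3 : (1 : ℂ) - x * q ^ j = 1 + -(x * q ^ j) := by ring
      rw [h3]
      have := Complex.norm_log_one_add_half_le_self (hnorm j)
      simpa [norm_neg, norm_mul, norm_pow] using this
  constructor
  · exact (Complex.multipliable_of_summable_log hsum).hasProd
  · have := Complex.cexp_tsum_eq_tprod (f := fun j => 1 - x * q ^ j) hne hsum
    rw [← this]
    exact Complex.exp_ne_zero _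

lemma hasProd_qp (q x : ℂ) (hq : ‖q‖ < 1) :
    HasProd (fun j : ℕ => 1 - x * q ^ j) (qPochInf q x) ∧
      ((∀ j : ℕ, 1 - x * q ^ j ≠ 0) → qPochInf q x ≠ 0) := by
  have hq0 : (0:ℝ) ≤ ‖q‖ := norm_nonneg q
  obtain ⟨N, hN⟩ : ∃ N : ℕ, ‖x‖ * ‖q‖ ^ N ≤ 1/2 := by
    have h1 : Tendsto (fun n : ℕ => ‖x‖ * ‖q‖ ^ n) atTop (nhds (‖x‖ * 0)) :=
      (tendsto_pow_atTop_nhds_zero_of_lt_one hq0 hq).const_mul _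
    rw [mul_zero] at h1
    exact ((h1.eventually_le_const (by norm_num : (0:ℝ) < 1/2)).exists)
  set f : ℕ → ℂ := fun j => 1 - x * q ^ j with hf
  set y : ℂ := x * q ^ N with hy
  have hynorm : ‖y‖ ≤ 1/2 := by rw [hy, norm_mul, norm_pow]; exact hN
  obtain ⟨hP, hPne⟩ := hasProd_small q y hq hynorm
  set P : ℂ := ∏' j : ℕ, (1 - y * q ^ j) with hPdef
  have hfg : ∀ j : ℕ, f (j + N) = 1 - y * q ^ j := by
    intro j; simp only [hf, hy]; rw [pow_add]; ring
  have hcompl : HasProd (f ∘ (↑) : ((↑(Finset.range N) : Set ℕ)ᶜ : Set ℕ) → ℂ) P := by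
    refine ((notMemRangeEquiv N).symm.hasProd_iff).mp ?_
    have heq : (((f ∘ (↑) : ((↑(Finset.range N) : Set ℕ)ᶜ : Set ℕ) → ℂ)) ∘
        ⇑(notMemRangeEquiv N).symm) = fun j : ℕ => 1 - y * q ^ j := by
      funext j
      show f (j + N) = 1 - y * q ^ j
      exact hfg j
    rw [heq]
    exact hP
  have hmain : HasProd f ((∏ j ∈ Finset.range N, f j) * P) :=
    HasProd.mul_compl ((Finset.range N).hasProd f) hcompl
  have htp : qPochInf q x = (∏ j ∈ Finset.range N, f j) * P := hmain.tprod_eq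
  constructor
  · rw [htp]; exact hmain
  · intro hne
    rw [htp]
    exact mul_ne_zero (Finset.prod_ne_zero_iff.mpr fun j _ => hne j) hPne

lemma qp_norm_le (q x : ℂ) (hq : ‖q‖ < 1) (n : ℕ) :
    ‖qPoch q x n‖ ≤ Real.exp (‖x‖ * (1 - ‖q‖)⁻¹) := by
  have hq0 : (0:ℝ) ≤ ‖q‖ := norm_nonneg q
  rw [qPoch, norm_prod]
  calc (∏ j ∈ Finset.range n, ‖1 - x * q ^ j‖)
      ≤ ∏ j ∈ Finset.range n, Real.exp (‖x‖ * ‖q‖ ^ j) := by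
        apply Finset.prod_le_prod (fun j _ => norm_nonneg _)
        intro j _
        calc ‖1 - x * q ^ j‖ ≤ ‖(1:ℂ)‖ + ‖x * q ^ j‖ := norm_sub_le _ _
          _ = ‖x‖ * ‖q‖ ^ j + 1 := by rw [norm_one, norm_mul, norm_pow]; ring
          _ ≤ Real.exp (‖x‖ * ‖q‖ ^ j) := Real.add_one_le_exp _
    _ = Real.exp (∑ j ∈ Finset.range n, ‖x‖ * ‖q‖ ^ j) := (Real.exp_sum _ _).symm
    _ ≤ Real.exp (‖x‖ * (1 - ‖q‖)⁻¹) := by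
        apply Real.exp_le_exp.mpr
        rw [← Finset.mul_sum]
        apply mul_le_mul_of_nonneg_left _ (norm_nonneg x)
        calc (∑ j ∈ Finset.range n, ‖q‖ ^ j) ≤ ∑' j : ℕ, ‖q‖ ^ j := by
              apply Summable.sum_le_tsum _ (fun j _ => by positivity)
              exact summable_geometric_of_lt_one hq0 hq
          _ = (1 - ‖q‖)⁻¹ := tsum_geometric_of_lt_one hq0 hq

lemma exists_pos_le_norm {f : ℕ → ℂ} {L : ℂ} (hL : L ≠ 0)
    (hf : Filter.Tendsto f atTop (nhds L)) (h0 : ∀ n, f n ≠ 0) :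
    ∃ δ : ℝ, 0 < δ ∧ ∀ n, δ ≤ ‖f n‖ := by
  have hLpos : 0 < ‖L‖ := norm_pos_iff.mpr hL
  have hev : ∀ᶠ n in atTop, ‖L‖/2 < ‖f n‖ :=
    (hf.norm).eventually_const_lt (by linarith)
  obtain ⟨N, hN⟩ := hev.exists_forall_of_atTop
  obtain ⟨m, hmem, hmin⟩ := Finset.exists_min_image (Finset.range (N+1))
    (fun n => ‖f n‖) ⟨0, by simp⟩
  refine ⟨min (‖L‖/2) ‖f m‖, lt_min (by linarith) (norm_pos_iff.mpr (h0 m)), fun n => ?_⟩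
  rcases le_or_gt n N with h | h
  · exact le_trans (min_le_right _ _) (hmin n (Finset.mem_range.mpr (by omega)))
  · exact le_trans (min_le_left _ _) (hN n (by omega)).le

lemma qPoch_zero (q x : ℂ) : qPoch q x 0 = 1 := Finset.prod_range_zero _

lemma qPoch_def (q x : ℂ) (n : ℕ) : qPoch q x n = ∏ j ∈ Finset.range n, (1 - x * q ^ j) := rfl

/-- The q-Gauss sum (3.11):
`∑_{k=0}^∞ (a,b;q)_k (c/ab)^k / ((q,c;q)_k) = (c/a,c/b;q)_∞ / ((c,c/ab;q)_∞)`. -/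
theorem q_gauss_sum (q a b c : ℂ) (hq : ‖q‖ < 1) (ha : a ≠ 0) (hb : b ≠ 0)
    (hz : ‖c / (a * b)‖ < 1) (hc : ∀ j : ℕ, c * q ^ j ≠ 1) :
    Summable (fun k : ℕ =>
      qPoch q a k * qPoch q b k * (c / (a * b)) ^ k / (qPoch q q k * qPoch q c k)) ∧
    qPochInf q c * qPochInf q (c / (a * b)) ≠ 0 ∧
    ∑' k : ℕ, qPoch q a k * qPoch q b k * (c / (a * b)) ^ k /
        (qPoch q q k * qPoch q c k) =
      qPochInf q (c / a) * qPochInf q (c / b) /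
        (qPochInf q c * qPochInf q (c / (a * b))) := by
  have hq' : ‖q‖ < 1 := by exact hq
  set u : ℂ := c / (a * b) with hu_def
  have hu : ‖u‖ < 1 := by exact hz
  have hq0 : (0:ℝ) ≤ ‖q‖ := norm_nonneg q
  have hu0 : (0:ℝ) ≤ ‖u‖ := norm_nonneg u
  have hab : a * b * u = c := by rw [hu_def]; field_simp
  -- nonvanishing of basic factors
  have hsmall : ∀ x : ℂ, ‖x‖ < 1 → ∀ j : ℕ, 1 - x * q ^ j ≠ 0 := by
    intro x hx j h
    have h1 : x * q ^ j = 1 := by linear_combination -h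
    have h2 : ‖x * q ^ j‖ = 1 := by rw [h1, norm_one]
    rw [norm_mul, norm_pow] at h2
    nlinarith [pow_le_one₀ hq0 hq'.le (n := j), norm_nonneg x, pow_nonneg hq0 j]
  have hcne : ∀ m : ℕ, 1 - c * q ^ m ≠ 0 := by
    intro m h; exact hc m (by linear_combination -h)
  have hcne' : ∀ m l : ℕ, 1 - (c * q ^ m) * q ^ l ≠ 0 := by
    intro m l; rw [mul_assoc, ← pow_add]; exact hcne (m + l)
  have hqne : ∀ j : ℕ, 1 - q * q ^ j ≠ 0 := hsmall q hq'
  have hune : ∀ j : ℕ, 1 - u * q ^ j ≠ 0 := hsmall u hu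
  have hqpqne : ∀ k, qPoch q q k ≠ 0 := qPoch_ne_zero hqne
  have hqpcne : ∀ m k, qPoch q (c * q ^ m) k ≠ 0 := fun m => qPoch_ne_zero (hcne' m)
  -- convergence of partial products
  have htend : ∀ x : ℂ, Tendsto (fun n => qPoch q x n) atTop (nhds (qPochInf q x)) := by
    intro x
    have h := ((hasProd_qp q x hq').1).tendsto_prod_nat
    refine h.congr fun n => ?_
    rw [qPoch_def]
  -- lower bounds
  obtain ⟨δq, hδqpos, hδq⟩ :=
    exists_pos_le_norm ((hasProd_qp q q hq').2 hqne) (htend q) hqpqne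
  obtain ⟨δc, hδcpos, hδc⟩ :=
    exists_pos_le_norm ((hasProd_qp q c hq').2 hcne) (htend c) (qPoch_ne_zero hcne)
  set Ba : ℝ := Real.exp (‖a‖ * (1 - ‖q‖)⁻¹) with hBa_def
  set Bb : ℝ := Real.exp (‖b‖ * (1 - ‖q‖)⁻¹) with hBb_def
  set Bc : ℝ := Real.exp (‖c‖ * (1 - ‖q‖)⁻¹) with hBc_def
  have hBapos : 0 < Ba := Real.exp_pos _
  have hBbpos : 0 < Bb := Real.exp_pos _
  have hBcpos : 0 < Bc := Real.exp_pos _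
  have hBa : ∀ n, ‖qPoch q a n‖ ≤ Ba := qp_norm_le q a hq'
  have hBb : ∀ n, ‖qPoch q b n‖ ≤ Bb := qp_norm_le q b hq'
  have hBc : ∀ n, ‖qPoch q c n‖ ≤ Bc := qp_norm_le q c hq'
  set δ2 : ℝ := δc / Bc with hδ2_def
  have hδ2pos : 0 < δ2 := div_pos hδcpos hBcpos
  have hlow : ∀ n k : ℕ, δ2 ≤ ‖qPoch q (c * q ^ n) k‖ := by
    intro n k
    have hsplit := qPoch_shift q c n k
    have hnz : ‖qPoch q c n‖ ≠ 0 := norm_ne_zero_iff.mpr (qPoch_ne_zero hcne n)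
    have h1 : ‖qPoch q (c * q ^ n) k‖ = ‖qPoch q c (n + k)‖ / ‖qPoch q c n‖ := by
      rw [eq_div_iff hnz, ← norm_mul, hsplit, mul_comm]
    rw [h1, hδ2_def]
    apply div_le_div₀ (norm_nonneg _) (hδc (n + k)) (norm_pos_iff.mpr (qPoch_ne_zero hcne n)) (hBc n)
  set K : ℝ := Ba * Bb / (δq * δ2) with hK_def
  have hKpos : 0 < K := by positivity
  -- the term family
  set T : ℕ → ℕ → ℂ := fun n k =>
    qPoch q a k * qPoch q b k * (u * q ^ n) ^ k / (qPoch q q k * qPoch q (c * q ^ n) k)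
    with hT_def
  have hden : ∀ n k : ℕ, δq * δ2 ≤ ‖qPoch q q k * qPoch q (c * q ^ n) k‖ := by
    intro n k
    rw [norm_mul]
    exact mul_le_mul (hδq k) (hlow n k) hδ2pos.le (le_trans hδqpos.le (hδq k))
  have hTbound : ∀ n k : ℕ, ‖T n k‖ ≤ K * (‖u‖ * ‖q‖ ^ n) ^ k := by
    intro n k
    have hnum : ‖qPoch q a k * qPoch q b k * (u * q ^ n) ^ k‖
        ≤ Ba * Bb * (‖u‖ * ‖q‖ ^ n) ^ k := by
      rw [norm_mul, norm_mul, norm_pow, norm_mul, norm_pow]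
      gcongr
      · exact hBa k
      · exact hBb k
    calc ‖T n k‖ = ‖qPoch q a k * qPoch q b k * (u * q ^ n) ^ k‖ /
          ‖qPoch q q k * qPoch q (c * q ^ n) k‖ := by rw [hT_def]; exact norm_div _ _
      _ ≤ (Ba * Bb * (‖u‖ * ‖q‖ ^ n) ^ k) / (δq * δ2) :=
          div_le_div₀ (by positivity) hnum (by positivity) (hden n k)
      _ = K * (‖u‖ * ‖q‖ ^ n) ^ k := by rw [hK_def]; ring
  have huqn : ∀ n : ℕ, ‖u‖ * ‖q‖ ^ n ≤ ‖u‖ := by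
    intro n
    calc ‖u‖ * ‖q‖ ^ n ≤ ‖u‖ * 1 := by
          gcongr
          exact pow_le_one₀ hq0 hq'.le
      _ = ‖u‖ := mul_one _
  have hTb : ∀ n k : ℕ, ‖T n k‖ ≤ K * ‖u‖ ^ k := by
    intro n k
    refine le_trans (hTbound n k) ?_
    gcongr
    exact huqn n
  have hgeom : Summable (fun k : ℕ => K * ‖u‖ ^ k) :=
    (summable_geometric_of_lt_one hu0 hu).mul_left K
  have hTsum : ∀ n : ℕ, Summable (T n) := fun n =>
    Summable.of_norm_bounded hgeom (hTb n)
  -- the contiguous relation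
  have hstep : ∀ n : ℕ,
      (1 - c * q ^ n) * (1 - u * q ^ n) * (∑' k, T n k)
        = (1 - a * u * q ^ n) * (1 - b * u * q ^ n) * (∑' k, T (n + 1) k) := by
    intro n
    have hab' : a * b * (u * q ^ n) = c * q ^ n := by rw [← mul_assoc, hab]
    have hcq : c * q ^ n * q = c * q ^ (n + 1) := by rw [pow_succ, ← mul_assoc]
    have huq : u * q ^ n * q = u * q ^ (n + 1) := by rw [pow_succ, ← mul_assoc]
    have hau : a * (u * q ^ n) = a * u * q ^ n := (mul_assoc a u _).symm
    have hbu : b * (u * q ^ n) = b * u * q ^ n := (mul_assoc b u _).symm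
    set E : ℕ → ℂ := fun k =>
      qPoch q a k * qPoch q b k * (u * q ^ n) ^ k * (1 - q ^ k) * (1 - (c * q ^ n) * q ^ k) /
        (qPoch q q k * qPoch q (c * q ^ (n + 1)) k) with hE_def
    have hLR : ∀ k : ℕ,
        (1 - c * q ^ n) * (1 - u * q ^ n) * T n k
          - (1 - a * u * q ^ n) * (1 - b * u * q ^ n) * T (n + 1) k = E k - E (k + 1) := by
      intro k
      have key := per_k q a b (u * q ^ n)
        (by rw [hab']; exact hcne n) k (hqpqne k) (hqne k)
        (by rw [hab']; exact hqpcne n k)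
        (by rw [hab', hcq]; exact hqpcne (n + 1) k)
        (by rw [hab']; exact hcne' n k)
        (by rw [hab', hcq]; exact hcne' (n + 1) k)
      rw [hab', hcq, huq, hau, hbu] at key
      rw [hT_def, hE_def]
      exact key
    have hLsum : Summable (fun k => (1 - c * q ^ n) * (1 - u * q ^ n) * T n k) :=
      (hTsum n).mul_left _
    have hRsum : Summable
        (fun k => (1 - a * u * q ^ n) * (1 - b * u * q ^ n) * T (n + 1) k) :=
      (hTsum (n + 1)).mul_left _
    have hE0 : E 0 = 0 := by
      rw [hE_def]
      simp
    have hEbound : ∀ k : ℕ, ‖E k‖ ≤ (K * (2 * (1 + ‖c‖))) * ‖u‖ ^ k := by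
      intro k
      have hnum : ‖qPoch q a k * qPoch q b k * (u * q ^ n) ^ k * (1 - q ^ k) *
          (1 - (c * q ^ n) * q ^ k)‖ ≤ Ba * Bb * ‖u‖ ^ k * 2 * (1 + ‖c‖) := by
        rw [norm_mul, norm_mul, norm_mul, norm_mul, norm_pow, norm_mul, norm_pow]
        have h1 : ‖(1:ℂ) - q ^ k‖ ≤ 2 := by
          calc ‖(1:ℂ) - q ^ k‖ ≤ ‖(1:ℂ)‖ + ‖q ^ k‖ := norm_sub_le _ _
            _ ≤ 1 + 1 := by
                rw [norm_one, norm_pow]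
                gcongr
                exact pow_le_one₀ hq0 hq'.le
            _ = 2 := by norm_num
        have h2 : ‖(1:ℂ) - (c * q ^ n) * q ^ k‖ ≤ 1 + ‖c‖ := by
          calc ‖(1:ℂ) - (c * q ^ n) * q ^ k‖ ≤ ‖(1:ℂ)‖ + ‖(c * q ^ n) * q ^ k‖ :=
                norm_sub_le _ _
            _ ≤ 1 + ‖c‖ := by
                rw [norm_one, norm_mul, norm_mul, norm_pow, norm_pow]
                have : ‖c‖ * ‖q‖ ^ n * ‖q‖ ^ k ≤ ‖c‖ * 1 * 1 := by
                  gcongr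
                  · exact pow_le_one₀ hq0 hq'.le
                  · exact pow_le_one₀ hq0 hq'.le
                nlinarith
        have h3 : (‖u‖ * ‖q‖ ^ n) ^ k ≤ ‖u‖ ^ k :=
          pow_le_pow_left₀ (by positivity) (huqn n) k
        gcongr
        · exact hBa k
        · exact hBb k
      calc ‖E k‖ = ‖qPoch q a k * qPoch q b k * (u * q ^ n) ^ k * (1 - q ^ k) *
            (1 - (c * q ^ n) * q ^ k)‖ / ‖qPoch q q k * qPoch q (c * q ^ (n + 1)) k‖ := by
            rw [hE_def]; exact norm_div _ _
        _ ≤ (Ba * Bb * ‖u‖ ^ k * 2 * (1 + ‖c‖)) / (δq * δ2) :=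
            div_le_div₀ (by positivity) hnum (by positivity) (hden (n + 1) k)
        _ = (K * (2 * (1 + ‖c‖))) * ‖u‖ ^ k := by rw [hK_def]; ring
    have hEtend : Tendsto E atTop (nhds 0) := by
      apply squeeze_zero_norm hEbound
      have := (tendsto_pow_atTop_nhds_zero_of_lt_one hu0 hu).const_mul (K * (2 * (1 + ‖c‖)))
      simpa using this
    -- telescoping
    have hsub : Summable (fun k =>
        (1 - c * q ^ n) * (1 - u * q ^ n) * T n k
          - (1 - a * u * q ^ n) * (1 - b * u * q ^ n) * T (n + 1) k) := hLsum.sub hRsum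
    have htsum0 : ∑' k, ((1 - c * q ^ n) * (1 - u * q ^ n) * T n k
        - (1 - a * u * q ^ n) * (1 - b * u * q ^ n) * T (n + 1) k) = 0 := by
      have hps : Tendsto (fun m => ∑ k ∈ Finset.range m,
          ((1 - c * q ^ n) * (1 - u * q ^ n) * T n k
            - (1 - a * u * q ^ n) * (1 - b * u * q ^ n) * T (n + 1) k)) atTop (nhds 0) := by
        have heq : ∀ m : ℕ, (∑ k ∈ Finset.range m,
            ((1 - c * q ^ n) * (1 - u * q ^ n) * T n k
              - (1 - a * u * q ^ n) * (1 - b * u * q ^ n) * T (n + 1) k)) = - E m := by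
          intro m
          rw [Finset.sum_congr rfl fun k _ => hLR k, Finset.sum_range_sub' E m, hE0]
          ring
        rw [show (0:ℂ) = -(0:ℂ) by ring]
        exact Tendsto.congr (fun m => (heq m).symm) hEtend.neg
      exact tendsto_nhds_unique hsub.hasSum.tendsto_sum_nat hps
    have h2 := htsum0
    rw [Summable.tsum_sub hLsum hRsum, tsum_mul_left, tsum_mul_left] at h2
    linear_combination h2
  -- iteration
  have hiter : ∀ n : ℕ, qPoch q c n * qPoch q u n * (∑' k, T 0 k)
      = qPoch q (b * u) n * qPoch q (a * u) n * (∑' k, T n k) := by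
    intro n
    induction n with
    | zero => rw [qPoch_zero, qPoch_zero, qPoch_zero, qPoch_zero]
    | succ n ih =>
      rw [qPoch_succ, qPoch_succ, qPoch_succ, qPoch_succ]
      have hs := hstep n
      linear_combination (1 - c * q ^ n) * (1 - u * q ^ n) * ih +
        qPoch q (b * u) n * qPoch q (a * u) n * hs
  -- S n → 1
  have hT00 : ∀ n : ℕ, T n 0 = 1 := by
    intro n
    rw [hT_def]
    simp [qPoch_zero]
  have hS1 : Tendsto (fun n => ∑' k, T n k) atTop (nhds 1) := by
    have hmaj : ∀ n k : ℕ, ‖T n (k + 1)‖ ≤ (K * ‖u‖ * ‖q‖ ^ n) * ‖u‖ ^ k := by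
      intro n k
      refine le_trans (hTbound n (k + 1)) ?_
      have h3 : (‖u‖ * ‖q‖ ^ n) ^ k ≤ ‖u‖ ^ k :=
        pow_le_pow_left₀ (by positivity) (huqn n) k
      calc K * (‖u‖ * ‖q‖ ^ n) ^ (k + 1)
          = K * (‖u‖ * ‖q‖ ^ n) * (‖u‖ * ‖q‖ ^ n) ^ k := by ring
        _ ≤ K * (‖u‖ * ‖q‖ ^ n) * ‖u‖ ^ k := by gcongr
        _ = (K * ‖u‖ * ‖q‖ ^ n) * ‖u‖ ^ k := by ring
    have hmajsum : ∀ n : ℕ, Summable (fun k : ℕ => (K * ‖u‖ * ‖q‖ ^ n) * ‖u‖ ^ k) :=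
      fun n => (summable_geometric_of_lt_one hu0 hu).mul_left _
    have hbound : ∀ n : ℕ, ‖(∑' k, T n k) - 1‖ ≤ (K * ‖u‖ * (1 - ‖u‖)⁻¹) * ‖q‖ ^ n := by
      intro n
      have hzero := Summable.tsum_eq_zero_add (hTsum n)
      have heq : (∑' k, T n k) - 1 = ∑' k, T n (k + 1) := by
        rw [hzero, hT00 n]; ring
      rw [heq]
      have hsum_norm : Summable (fun k : ℕ => ‖T n (k + 1)‖) :=
        Summable.of_nonneg_of_le (fun _ => norm_nonneg _) (hmaj n) (hmajsum n)
      calc ‖∑' k, T n (k + 1)‖ ≤ ∑' k, ‖T n (k + 1)‖ := norm_tsum_le_tsum_norm hsum_norm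
        _ ≤ ∑' k : ℕ, (K * ‖u‖ * ‖q‖ ^ n) * ‖u‖ ^ k :=
            Summable.tsum_le_tsum (hmaj n) hsum_norm (hmajsum n)
        _ = (K * ‖u‖ * ‖q‖ ^ n) * (1 - ‖u‖)⁻¹ := by
            rw [tsum_mul_left, tsum_geometric_of_lt_one hu0 hu]
        _ = (K * ‖u‖ * (1 - ‖u‖)⁻¹) * ‖q‖ ^ n := by ring
    have h0 : Tendsto (fun n => (∑' k, T n k) - 1) atTop (nhds 0) := by
      apply squeeze_zero_norm hbound
      have := (tendsto_pow_atTop_nhds_zero_of_lt_one hq0 hq').const_mul (K * ‖u‖ * (1 - ‖u‖)⁻¹)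
      simpa using this
    have := h0.add_const 1
    simpa using this
  -- pass to the limit
  have hfinal : qPochInf q c * qPochInf q u * (∑' k, T 0 k)
      = qPochInf q (b * u) * qPochInf q (a * u) := by
    have h1 : Tendsto (fun n => qPoch q c n * qPoch q u n * (∑' k, T 0 k)) atTop
        (nhds (qPochInf q c * qPochInf q u * (∑' k, T 0 k))) :=
      ((htend c).mul (htend u)).mul_const _
    have h2 : Tendsto (fun n => qPoch q (b * u) n * qPoch q (a * u) n * (∑' k, T n k)) atTop
        (nhds (qPochInf q (b * u) * qPochInf q (a * u) * 1)) :=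
      ((htend (b * u)).mul (htend (a * u))).mul hS1
    have h3 := tendsto_nhds_unique (h1.congr fun n => hiter n) h2
    rw [mul_one] at h3
    exact h3
  have hcinf : qPochInf q c ≠ 0 := (hasProd_qp q c hq').2 hcne
  have huinf : qPochInf q u ≠ 0 := (hasProd_qp q u hq').2 hune
  -- identify the statement's series with T 0
  have hfun : ∀ k : ℕ, qPoch q a k * qPoch q b k * u ^ k / (qPoch q q k * qPoch q c k)
      = T 0 k := by
    intro k
    rw [hT_def]
    norm_num
  have hca : c / a = b * u := by rw [hu_def]; field_simp
  have hcb : c / b = a * u := by rw [hu_def]; field_simp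
  refine ⟨?_, mul_ne_zero hcinf huinf, ?_⟩
  · exact (hTsum 0).congr fun k => (hfun k).symm
  · rw [tsum_congr hfun, hca, hcb]
    rw [eq_div_iff (mul_ne_zero hcinf huinf)]
    linear_combination hfinal
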